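/- arXiv:1711.00651 — 2 statements merged into one kernel-verified Lean document; each statement's English description precedes it below -/
import Mathlib

section
/- Let u be a v-minimal word of a synchronizing automaton 𝒜. If x is a word such that θ_i(x) = 0_i for some i ∈ supp(u), then θ_j(x) = 0_j for all j ∈ supp(u). -/
open scoped BigOperators

set_option synthInstance.maxHeartbeats 1000000
set_option maxHeartbeats 1000000

noncomputable section

/-- Action of a word on a state: `q · u`. -/
def actW {Q A : Type*} (δ : Q → A → Q) (q : Q) (u : List A) : Q :=
  u.foldl δ q

/-- The image `Q · u` of the full state set under a word. -/
def imageSet {Q A : Type*} [Fintype Q] [DecidableEq Q] (δ : Q → A → Q) (u : List A) :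
    Finset Q :=
  Finset.image (fun q => actW δ q u) Finset.univ

/-- The rank `rk(u) = |Q · u|` of a word. -/
def wordRank {Q A : Type*} [Fintype Q] [DecidableEq Q] (δ : Q → A → Q) (u : List A) : ℕ :=
  (imageSet δ u).card

/-- A word is reset (synchronizing) if `|Q · u| = 1`. -/
def IsReset {Q A : Type*} [Fintype Q] [DecidableEq Q] (δ : Q → A → Q) (u : List A) : Prop :=
  wordRank δ u = 1

/-- The automaton is synchronizing if it admits a reset word. -/
def IsSynchronizing {Q A : Type*} [Fintype Q] [DecidableEq Q] (δ : Q → A → Q) : Prop :=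
  ∃ u : List A, IsReset δ u

/-- `Syn(𝒜)`, the set of reset words. -/
def SynWords {Q A : Type*} [Fintype Q] [DecidableEq Q] (δ : Q → A → Q) : Set (List A) :=
  {u | IsReset δ u}

/-- The hyperplane `w⊥ = {v ∈ ℂQ : ∑ q, v q = 0}`. -/
def Wperp (Q : Type*) [Fintype Q] : Submodule ℂ (Q → ℂ) :=
  LinearMap.ker (∑ q : Q, (LinearMap.proj q : (Q → ℂ) →ₗ[ℂ] ℂ))

theorem mem_Wperp {Q : Type*} [Fintype Q] (v : Q → ℂ) :
    v ∈ Wperp Q ↔ ∑ q : Q, v q = 0 := by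
  simp [Wperp, LinearMap.mem_ker, LinearMap.sum_apply]

/-- The (right) action of a word on row vectors `v ↦ v·π(u)`. -/
def piLin {Q A : Type*} [Fintype Q] [DecidableEq Q] (δ : Q → A → Q) (u : List A) :
    (Q → ℂ) →ₗ[ℂ] (Q → ℂ) where
  toFun v := fun p => ∑ q ∈ Finset.univ.filter (fun q => actW δ q u = p), v q
  map_add' := by
    intro a b; funext p; simp [Finset.sum_add_distrib]
  map_smul' := by
    intro c v; funext p; simp [Finset.mul_sum]

theorem piLin_mem {Q A : Type*} [Fintype Q] [DecidableEq Q] (δ : Q → A → Q) (u : List A) :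
    ∀ v ∈ Wperp Q, piLin δ u v ∈ Wperp Q := by
  intro v hv
  rw [mem_Wperp] at hv ⊢
  have h := Finset.sum_fiberwise (Finset.univ : Finset Q) (fun q => actW δ q u) v
  calc ∑ p : Q, piLin δ u v p
      = ∑ p : Q, ∑ q ∈ Finset.univ.filter (fun q => actW δ q u = p), v q := rfl
    _ = ∑ q : Q, v q := h
    _ = 0 := hv

/-- The endomorphism of `w⊥` induced by a word. -/
def rhoEnd {Q A : Type*} [Fintype Q] [DecidableEq Q] (δ : Q → A → Q) (u : List A) :
    Module.End ℂ (Wperp Q) :=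
  (piLin δ u).restrict (piLin_mem δ u)

/-- The representation `ρ : Σ* → End(w⊥)`; we record it in the multiplicative opposite so
that `ρ (u ++ v) = ρ u * ρ v` (the paper's right-action convention). -/
def rho {Q A : Type*} [Fintype Q] [DecidableEq Q] (δ : Q → A → Q) (u : List A) :
    (Module.End ℂ (Wperp Q))ᵐᵒᵖ :=
  MulOpposite.op (rhoEnd δ u)

/-- `ℛ`, the ℂ-subalgebra generated by `ρ(Σ*)`. -/
def Ralg {Q A : Type*} [Fintype Q] [DecidableEq Q] (δ : Q → A → Q) :
    Subalgebra ℂ (Module.End ℂ (Wperp Q))ᵐᵒᵖ :=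
  Algebra.adjoin ℂ (Set.range (rho δ))

/-- `ρ(u)` seen as an element of `ℛ`. -/
def rhoR {Q A : Type*} [Fintype Q] [DecidableEq Q] (δ : Q → A → Q) (u : List A) :
    Ralg δ :=
  ⟨rho δ u, Algebra.subset_adjoin (Set.mem_range_self u)⟩

/-- The Jacobson radical `Rad(ℛ)` of `ℛ`, realised as a subset of the ambient algebra via
the standard characterisation: `x ∈ Rad(ℛ)` iff `x ∈ ℛ` and for every `y ∈ ℛ` the element
`1 - y * x` is left-invertible in `ℛ`. -/
def RadSet {Q A : Type*} [Fintype Q] [DecidableEq Q] (δ : Q → A → Q) :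
    Set (Module.End ℂ (Wperp Q))ᵐᵒᵖ :=
  {x | x ∈ Ralg δ ∧ ∀ y ∈ Ralg δ, ∃ z ∈ Ralg δ, z * (1 - y * x) = 1}

/-- `Rad(𝒜)`: the set of radical words, i.e. words `u` with `ρ(u) ∈ Rad(ℛ)`. -/
def RadWords {Q A : Type*} [Fintype Q] [DecidableEq Q] (δ : Q → A → Q) : Set (List A) :=
  {u | rho δ u ∈ RadSet δ}

/-- The automaton is semisimple when `Rad(𝒜) = Syn(𝒜)`. -/
def IsSemisimple {Q A : Type*} [Fintype Q] [DecidableEq Q] (δ : Q → A → Q) : Prop :=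
  RadWords δ = SynWords δ

/-- The `t`-packing number `D(t,r,n)`: the maximum size of a family of `r`-subsets of an
`n`-set in which every `t`-subset is contained in at most one member. -/
def packingNumber (t r n : ℕ) : ℕ :=
  sSup {m | ∃ F : Finset (Finset (Fin n)), F.card = m ∧ (∀ S ∈ F, S.card = r) ∧
    ∀ T : Finset (Fin n), T.card = t → (F.filter fun S => T ⊆ S).card ≤ 1}

/-- The former-rank `Fr(𝒜)`: the least rank of a non-reset word. -/
def formerRank {Q A : Type*} [Fintype Q] [DecidableEq Q] (δ : Q → A → Q) : ℕ :=
  sInf {m | ∃ u : List A, ¬ IsReset δ u ∧ wordRank δ u = m}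

/-- `Fs(𝒜)`: the set of former-synchronizing words. -/
def Fs {Q A : Type*} [Fintype Q] [DecidableEq Q] (δ : Q → A → Q) : Set (List A) :=
  {u | wordRank δ u = formerRank δ}

/-- `θ_i(u)`: the image of `ρ(u)` in the `i`-th Wedderburn–Artin matrix component, where
`e : ℛ → ∏ i, M_{n_i}(ℂ)` is the quotient map `ψ` followed by the fixed isomorphism. -/
def theta {Q A : Type*} [Fintype Q] [DecidableEq Q] (δ : Q → A → Q) {k : ℕ} {nn : Fin k → ℕ}
    (e : Ralg δ →ₐ[ℂ] ∀ i : Fin k, Matrix (Fin (nn i)) (Fin (nn i)) ℂ)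
    (u : List A) (i : Fin k) : Matrix (Fin (nn i)) (Fin (nn i)) ℂ :=
  e (rhoR δ u) i

/-- `supp(v) = {i : θ_i(v) ≠ 0}`. -/
def suppW {Q A : Type*} [Fintype Q] [DecidableEq Q] (δ : Q → A → Q) {k : ℕ} {nn : Fin k → ℕ}
    (e : Ralg δ →ₐ[ℂ] ∀ i : Fin k, Matrix (Fin (nn i)) (Fin (nn i)) ℂ)
    (v : List A) : Set (Fin k) :=
  {i | theta δ e v i ≠ 0}

/-- `u ∈ Σ* v Σ*`, i.e. `v` is a factor of `u`. -/
def InFactor {A : Type*} (v u : List A) : Prop :=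
  ∃ a b : List A, u = a ++ v ++ b

/-- `u` is a `v`-minimal word: `u ∈ Σ*vΣ*`, `supp(u)` is nonempty, and `supp(u)` is minimal
among the nonempty supports of words in `Σ*vΣ*`. -/
def IsVMinimal {Q A : Type*} [Fintype Q] [DecidableEq Q] (δ : Q → A → Q) {k : ℕ}
    {nn : Fin k → ℕ}
    (e : Ralg δ →ₐ[ℂ] ∀ i : Fin k, Matrix (Fin (nn i)) (Fin (nn i)) ℂ)
    (v u : List A) : Prop :=
  InFactor v u ∧ (suppW δ e u).Nonempty ∧
    ∀ z : List A, InFactor v z → suppW δ e z ⊆ suppW δ e u →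
      suppW δ e z = ∅ ∨ suppW δ e z = suppW δ e u

/-- The `i`-th factor monoid `ℳ_i = θ_i(Σ*)`. -/
def factorMonoid {Q A : Type*} [Fintype Q] [DecidableEq Q] (δ : Q → A → Q) {k : ℕ}
    {nn : Fin k → ℕ}
    (e : Ralg δ →ₐ[ℂ] ∀ i : Fin k, Matrix (Fin (nn i)) (Fin (nn i)) ℂ)
    (i : Fin k) : Set (Matrix (Fin (nn i)) (Fin (nn i)) ℂ) :=
  Set.range fun u : List A => theta δ e u i

/-- A two-sided ideal of the (sub)monoid `M`. -/
def IsSetIdeal {X : Type*} [Mul X] (M I : Set X) : Prop :=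
  I ⊆ M ∧ ∀ a ∈ M, ∀ x ∈ I, a * x ∈ I ∧ x * a ∈ I

/-- `I` is a `0`-minimal (two-sided) ideal of the monoid `M`. -/
def IsZeroMinimalIdeal {X : Type*} [Mul X] [Zero X] (M I : Set X) : Prop :=
  IsSetIdeal M I ∧ (0 : X) ∈ I ∧ I ≠ {0} ∧
    ∀ J : Set X, IsSetIdeal M J → (0 : X) ∈ J → J ⊆ I → J ≠ {0} → J = I

/-- `Rnk_i(g) = min {rk(u) : θ_i(u) = g}`. -/
def rnkElt {Q A : Type*} [Fintype Q] [DecidableEq Q] (δ : Q → A → Q) {k : ℕ}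
    {nn : Fin k → ℕ}
    (e : Ralg δ →ₐ[ℂ] ∀ i : Fin k, Matrix (Fin (nn i)) (Fin (nn i)) ℂ)
    (i : Fin k) (g : Matrix (Fin (nn i)) (Fin (nn i)) ℂ) : ℕ :=
  sInf {m | ∃ u : List A, theta δ e u i = g ∧ wordRank δ u = m}

/-- `Rnk(ℐ_i) = min {Rnk_i(g) : g ∈ ℐ_i ∖ {0}}`. -/
def rnkIdeal {Q A : Type*} [Fintype Q] [DecidableEq Q] (δ : Q → A → Q) {k : ℕ}
    {nn : Fin k → ℕ}
    (e : Ralg δ →ₐ[ℂ] ∀ i : Fin k, Matrix (Fin (nn i)) (Fin (nn i)) ℂ)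
    (i : Fin k) (I : Set (Matrix (Fin (nn i)) (Fin (nn i)) ℂ)) : ℕ :=
  sInf {m | ∃ g ∈ I, g ≠ 0 ∧ rnkElt δ e i g = m}

/-- `w` `u`-represents `g`: `w ∈ Σ*uΣ*`, `θ_i(w) = g`, and either `g = 0` or `rk(w)` is
minimum among all words with the first two properties. -/
def URepresents {Q A : Type*} [Fintype Q] [DecidableEq Q] (δ : Q → A → Q) {k : ℕ}
    {nn : Fin k → ℕ}
    (e : Ralg δ →ₐ[ℂ] ∀ i : Fin k, Matrix (Fin (nn i)) (Fin (nn i)) ℂ)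
    (u : List A) (i : Fin k) (w : List A) (g : Matrix (Fin (nn i)) (Fin (nn i)) ℂ) : Prop :=
  InFactor u w ∧ theta δ e w i = g ∧
    (g = 0 ∨ ∀ w' : List A, InFactor u w' → theta δ e w' i = g → wordRank δ w ≤ wordRank δ w')

/-- The relation `σ_i` on `ℐ_i`. -/
def sigmaRel {Q A : Type*} [Fintype Q] [DecidableEq Q] (δ : Q → A → Q) {k : ℕ}
    {nn : Fin k → ℕ}
    (e : Ralg δ →ₐ[ℂ] ∀ i : Fin k, Matrix (Fin (nn i)) (Fin (nn i)) ℂ)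
    (i : Fin k) (u : List A)
    (g f : Matrix (Fin (nn i)) (Fin (nn i)) ℂ) : Prop :=
  g = f ∨ ∃ w₁ w₂ : List A, URepresents δ e u i w₁ g ∧ URepresents δ e u i w₂ f ∧
    1 < (imageSet δ w₁ ∩ imageSet δ w₂).card

/-- `T ⊆ [1,k]` is a core. -/
def IsCore {Q A : Type*} [Fintype Q] [DecidableEq Q] (δ : Q → A → Q) {k : ℕ}
    {nn : Fin k → ℕ}
    (e : Ralg δ →ₐ[ℂ] ∀ i : Fin k, Matrix (Fin (nn i)) (Fin (nn i)) ℂ)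
    (T : Set (Fin k)) : Prop :=
  ∀ x : List A, (∀ i ∈ T, theta δ e x i = 0) → ∀ i : Fin k, theta δ e x i = 0

/-- A minimal core. -/
def IsMinimalCore {Q A : Type*} [Fintype Q] [DecidableEq Q] (δ : Q → A → Q) {k : ℕ}
    {nn : Fin k → ℕ}
    (e : Ralg δ →ₐ[ℂ] ∀ i : Fin k, Matrix (Fin (nn i)) (Fin (nn i)) ℂ)
    (T : Set (Fin k)) : Prop :=
  IsCore δ e T ∧ ∀ T' : Set (Fin k), T' ⊆ T → IsCore δ e T' → T' = T

/-- An automaton congruence. -/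
def IsCongruence {Q A : Type*} (δ : Q → A → Q) (σ : Q → Q → Prop) : Prop :=
  Equivalence σ ∧ ∀ q p : Q, σ q p → ∀ u : List A, σ (actW δ q u) (actW δ p u)

/-- A simple automaton: the only congruences are the identity and the universal relation. -/
def IsSimple {Q A : Type*} (δ : Q → A → Q) : Prop :=
  ∀ σ : Q → Q → Prop, IsCongruence δ σ → σ = Eq ∨ σ = fun _ _ => True


section MyAux

variable {Q A : Type*} [Fintype Q] [DecidableEq Q] (δ : Q → A → Q)

theorem myActW_append (q : Q) (a b : List A) :
    actW δ q (a ++ b) = actW δ (actW δ q a) b :=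
  List.foldl_append

theorem myPiLin_append (a b : List A) :
    piLin δ (a ++ b) = (piLin δ b).comp (piLin δ a) := by
  apply LinearMap.ext; intro v; funext p
  show ∑ q ∈ Finset.univ.filter (fun q => actW δ q (a ++ b) = p), v q
      = ∑ q' ∈ Finset.univ.filter (fun q' => actW δ q' b = p),
          ∑ q ∈ Finset.univ.filter (fun q => actW δ q a = q'), v q
  rw [Finset.sum_fiberwise_eq_sum_filter]
  refine Finset.sum_congr ?_ (fun _ _ => rfl)
  apply Finset.filter_congr
  intro q _
  simp [myActW_append]

theorem myRhoEnd_append (a b : List A) :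
    rhoEnd δ (a ++ b) = rhoEnd δ b * rhoEnd δ a := by
  apply LinearMap.ext; intro w; apply Subtype.ext
  show ((rhoEnd δ (a ++ b)) w : Q → ℂ) = ((rhoEnd δ b) ((rhoEnd δ a) w) : Q → ℂ)
  simp only [rhoEnd, LinearMap.restrict_coe_apply, myPiLin_append, LinearMap.comp_apply]

theorem myRho_append (a b : List A) :
    rho δ (a ++ b) = rho δ a * rho δ b := by
  unfold rho
  rw [myRhoEnd_append, MulOpposite.op_mul]

theorem myRho_nil : rho δ ([] : List A) = 1 := by
  unfold rho
  have h : rhoEnd δ ([] : List A) = 1 := by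
    apply LinearMap.ext; intro w; apply Subtype.ext
    show ((rhoEnd δ ([] : List A)) w : Q → ℂ) = (w : Q → ℂ)
    simp only [rhoEnd, LinearMap.restrict_coe_apply]
    funext p
    show ∑ q ∈ Finset.univ.filter (fun q => actW δ q [] = p), (w : Q → ℂ) q = (w : Q → ℂ) p
    show ∑ q ∈ Finset.univ.filter (fun q => q = p), (w : Q → ℂ) q = (w : Q → ℂ) p
    simp [actW, Finset.sum_filter, Finset.sum_ite_eq']
  rw [h, MulOpposite.op_one]

theorem myRhoR_append (a b : List A) :
    rhoR δ (a ++ b) = rhoR δ a * rhoR δ b := by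
  apply Subtype.ext
  show rho δ (a ++ b) = rho δ a * rho δ b
  exact myRho_append δ a b

theorem myTheta_append {k : ℕ} {nn : Fin k → ℕ}
    (e : Ralg δ →ₐ[ℂ] ∀ i : Fin k, Matrix (Fin (nn i)) (Fin (nn i)) ℂ)
    (a b : List A) (i : Fin k) :
    theta δ e (a ++ b) i = theta δ e a i * theta δ e b i := by
  unfold theta
  rw [myRhoR_append, map_mul]
  rfl

theorem myTheta_span_top {k : ℕ} {nn : Fin k → ℕ}
    (e : Ralg δ →ₐ[ℂ] ∀ i : Fin k, Matrix (Fin (nn i)) (Fin (nn i)) ℂ)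
    (he_surj : Function.Surjective e) (j : Fin k) :
    Submodule.span ℂ (Set.range fun y : List A => theta δ e y j) = ⊤ := by
  rw [Submodule.eq_top_iff']
  intro m
  obtain ⟨r, hr⟩ := he_surj (Pi.single j m)
  have hclos : (Submonoid.closure (Set.range (rho δ)) : Set _) ⊆ Set.range (rho δ) := by
    intro a ha
    induction ha using Submonoid.closure_induction with
    | mem x hx => exact hx
    | one => exact ⟨[], myRho_nil δ⟩
    | mul x y _ _ hx hy =>
      obtain ⟨a1, rfl⟩ := hx
      obtain ⟨a2, rfl⟩ := hy
      exact ⟨a1 ++ a2, myRho_append δ a1 a2⟩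
  have hRle : Submodule.span ℂ (Set.range (rho δ)) ≤ Subalgebra.toSubmodule (Ralg δ) := by
    rw [Submodule.span_le]
    rintro a ⟨y, rfl⟩
    exact Algebra.subset_adjoin (Set.mem_range_self y)
  have hr_span : (r : (Module.End ℂ (Wperp Q))ᵐᵒᵖ) ∈ Submodule.span ℂ (Set.range (rho δ)) := by
    have h1 : (r : (Module.End ℂ (Wperp Q))ᵐᵒᵖ) ∈ Subalgebra.toSubmodule (Algebra.adjoin ℂ (Set.range (rho δ))) := r.2
    rw [Algebra.adjoin_eq_span] at h1
    exact Submodule.span_mono hclos h1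
  have key : ∀ (a : (Module.End ℂ (Wperp Q))ᵐᵒᵖ)
      (_ : a ∈ Submodule.span ℂ (Set.range (rho δ))) (h : a ∈ Ralg δ),
      e ⟨a, h⟩ j ∈ Submodule.span ℂ (Set.range fun y : List A => theta δ e y j) := by
    intro a ha
    induction ha using Submodule.span_induction with
    | mem a hmem =>
      intro h
      obtain ⟨y, rfl⟩ := hmem
      have : (⟨rho δ y, h⟩ : Ralg δ) = rhoR δ y := rfl
      rw [this]
      exact Submodule.subset_span ⟨y, rfl⟩
    | zero =>
      intro h
      have : (⟨0, h⟩ : Ralg δ) = 0 := rfl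
      rw [this, map_zero]
      exact Submodule.zero_mem _
    | add a1 a2 ha1 ha2 ih1 ih2 =>
      intro h
      have h1 := hRle ha1
      have h2 := hRle ha2
      have : (⟨a1 + a2, h⟩ : Ralg δ) = ⟨a1, h1⟩ + ⟨a2, h2⟩ := rfl
      rw [this, map_add]
      exact Submodule.add_mem _ (ih1 h1) (ih2 h2)
    | smul c a1 ha1 ih =>
      intro h
      have h1 := hRle ha1
      have : (⟨c • a1, h⟩ : Ralg δ) = c • ⟨a1, h1⟩ := rfl
      rw [this, map_smul]
      exact Submodule.smul_mem _ c (ih h1)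
  have hfin := key (r : (Module.End ℂ (Wperp Q))ᵐᵒᵖ) hr_span r.2
  have heta : (⟨(r : (Module.End ℂ (Wperp Q))ᵐᵒᵖ), r.2⟩ : Ralg δ) = r := rfl
  rw [heta, hr] at hfin
  simpa using hfin

end MyAux

theorem stmt14 {Q A : Type*} [Fintype Q] [DecidableEq Q] (δ : Q → A → Q)
    {k : ℕ} {nn : Fin k → ℕ}
    (e : Ralg δ →ₐ[ℂ] ∀ i : Fin k, Matrix (Fin (nn i)) (Fin (nn i)) ℂ)
    (he_surj : Function.Surjective e)
    (he_ker : ∀ x : Ralg δ, e x = 0 ↔ (x : (Module.End ℂ (Wperp Q))ᵐᵒᵖ) ∈ RadSet δ)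
    (hsync : IsSynchronizing δ)
    (v u : List A) (hu : IsVMinimal δ e v u)
    (x : List A) (i : Fin k) (hi : i ∈ suppW δ e u) (hx : theta δ e x i = 0) :
    ∀ j ∈ suppW δ e u, theta δ e x j = 0 := by
  intro j hj
  have key : ∀ y y' : List A,
      theta δ e u j * (theta δ e y j * (theta δ e x j * (theta δ e y' j * theta δ e u j))) = 0 := by
    intro y y'
    set z : List A := u ++ (y ++ (x ++ (y' ++ u))) with hz
    have hzθ : ∀ j' : Fin k, theta δ e z j' =
        theta δ e u j' * (theta δ e y j' * (theta δ e x j' * (theta δ e y' j' * theta δ e u j'))) := by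
      intro j'
      simp only [hz, myTheta_append]
    have hinf : InFactor v z := by
      obtain ⟨a, b, hab⟩ := hu.1
      refine ⟨a, b ++ (y ++ (x ++ (y' ++ u))), ?_⟩
      rw [hz, hab]
      simp [List.append_assoc]
    have hsub : suppW δ e z ⊆ suppW δ e u := by
      intro j' hj'
      simp only [suppW, Set.mem_setOf_eq] at hj' ⊢
      intro h0
      exact hj' (by rw [hzθ, h0, zero_mul])
    have hzi : theta δ e z i = 0 := by
      rw [hzθ, hx]
      simp
    rcases hu.2.2 z hinf hsub with hempty | heq
    · rw [← hzθ]
      by_contra hne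
      have : j ∈ suppW δ e z := hne
      rw [hempty] at this
      exact this
    · exfalso
      have : i ∈ suppW δ e z := by rw [heq]; exact hi
      exact this hzi
  have hspan := myTheta_span_top δ e he_surj j
  have step1 : ∀ (y : List A) (b : Matrix (Fin (nn j)) (Fin (nn j)) ℂ),
      theta δ e u j * (theta δ e y j * (theta δ e x j * (b * theta δ e u j))) = 0 := by
    intro y b
    have hb : b ∈ Submodule.span ℂ (Set.range fun y : List A => theta δ e y j) := by
      rw [hspan]; trivial
    induction hb using Submodule.span_induction with
    | mem b hb => obtain ⟨y', rfl⟩ := hb; exact key y y'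
    | zero => simp
    | add b1 b2 _ _ ih1 ih2 =>
      simp only [add_mul, mul_add] at *
      rw [ih1, ih2, add_zero]
    | smul c b1 _ ih =>
      simp only [smul_mul_assoc, mul_smul_comm] at *
      rw [ih, smul_zero]
  have key2 : ∀ a b : Matrix (Fin (nn j)) (Fin (nn j)) ℂ,
      theta δ e u j * (a * (theta δ e x j * (b * theta δ e u j))) = 0 := by
    intro a b
    have ha : a ∈ Submodule.span ℂ (Set.range fun y : List A => theta δ e y j) := by
      rw [hspan]; trivial
    refine Submodule.span_induction
      (p := fun a _ => ∀ b : Matrix (Fin (nn j)) (Fin (nn j)) ℂ,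
        theta δ e u j * (a * (theta δ e x j * (b * theta δ e u j))) = 0)
      ?_ ?_ ?_ ?_ ha b
    · rintro a ⟨y, rfl⟩ b
      exact step1 y b
    · intro b; simp
    · intro a1 a2 _ _ ih1 ih2 b
      simp only [add_mul, mul_add]
      rw [ih1 b, ih2 b, add_zero]
    · intro c a1 _ ih b
      simp only [smul_mul_assoc, mul_smul_comm]
      rw [ih b, smul_zero]
  -- now derive theta δ e x j = 0 from key2 and theta δ e u j ≠ 0
  have hU : theta δ e u j ≠ 0 := hj
  by_contra hX
  obtain ⟨p, q, hpq⟩ : ∃ p q, theta δ e u j p q ≠ 0 := by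
    by_contra h
    push_neg at h
    exact hU (Matrix.ext fun p q => by simpa using h p q)
  obtain ⟨r, s, hrs⟩ : ∃ r s, theta δ e x j r s ≠ 0 := by
    by_contra h
    push_neg at h
    exact hX (Matrix.ext fun r s => by simpa using h r s)
  have hcalc := key2 (Matrix.single q r (1 : ℂ)) (Matrix.single s p (1 : ℂ))
  set U := theta δ e u j with hUdef
  set X := theta δ e x j with hXdef
  have h2 : ∀ c, (X * (Matrix.single s p (1 : ℂ) * U)) r c = X r s * U p c := by
    intro c
    rw [Matrix.mul_apply]
    rw [Finset.sum_eq_single s]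
    · rw [Matrix.single_mul_apply_same, one_mul]
    · intro d _ hd
      rw [Matrix.single_mul_apply_of_ne _ _ _ _ _ hd, mul_zero]
    · intro h; exact absurd (Finset.mem_univ s) h
  have h4 : (U * (Matrix.single q r (1 : ℂ) *
      (X * (Matrix.single s p (1 : ℂ) * U)))) p q = U p q * (X r s * U p q) := by
    rw [Matrix.mul_apply]
    rw [Finset.sum_eq_single q]
    · rw [Matrix.single_mul_apply_same, one_mul, h2]
    · intro d _ hd
      rw [Matrix.single_mul_apply_of_ne _ _ _ _ _ hd, mul_zero]
    · intro h; exact absurd (Finset.mem_univ q) h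
  rw [hcalc] at h4
  have : U p q * (X r s * U p q) = 0 := by simpa using h4.symm
  rcases mul_eq_zero.mp this with h | h
  · exact hpq h
  · rcases mul_eq_zero.mp h with h' | h'
    · exact hrs h'
    · exact hpq h'

end
end

section
/- Let u be a v-minimal word of a synchronizing automaton 𝒜, i ∈ supp(u), and let w be a word that u-represents g ∈ ℐ_i. Then for any words a, b ∈ Σ*, the word awb u-represents θ_i(a)·g·θ_i(b). -/
open scoped BigOperators

set_option synthInstance.maxHeartbeats 1000000
set_option maxHeartbeats 1000000

noncomputable section

/-! ### Auxiliary lemmas -/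

theorem actW_append' {Q A : Type*} (δ : Q → A → Q) (q : Q) (x y : List A) :
    actW δ q (x ++ y) = actW δ (actW δ q x) y := by
  simp [actW, List.foldl_append]

theorem piLin_append {Q A : Type*} [Fintype Q] [DecidableEq Q] (δ : Q → A → Q)
    (x y : List A) (v : Q → ℂ) (p : Q) :
    piLin δ (x ++ y) v p = piLin δ y (piLin δ x v) p := by
  show ∑ q ∈ Finset.univ.filter (fun q => actW δ q (x ++ y) = p), v q
      = ∑ r ∈ Finset.univ.filter (fun r => actW δ r y = p),
          ∑ q ∈ Finset.univ.filter (fun q => actW δ q x = r), v q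
  rw [Finset.sum_fiberwise_eq_sum_filter Finset.univ
      (Finset.univ.filter (fun r => actW δ r y = p)) (fun q => actW δ q x) v]
  apply Finset.sum_congr
  · ext q; simp [actW_append']
  · intro _ _; rfl

theorem rho_append {Q A : Type*} [Fintype Q] [DecidableEq Q] (δ : Q → A → Q)
    (x y : List A) : rho δ (x ++ y) = rho δ x * rho δ y := by
  have h : rhoEnd δ (x ++ y) = rhoEnd δ y * rhoEnd δ x := by
    apply LinearMap.ext
    intro v
    apply Subtype.ext
    funext p
    exact piLin_append δ x y (v : Q → ℂ) p
  simp only [rho, h]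
  rfl

theorem rho_nil {Q A : Type*} [Fintype Q] [DecidableEq Q] (δ : Q → A → Q) :
    rho δ ([] : List A) = 1 := by
  have h : rhoEnd δ ([] : List A) = 1 := by
    apply LinearMap.ext
    intro v
    apply Subtype.ext
    funext p
    show ∑ q ∈ Finset.univ.filter (fun q => actW δ q ([] : List A) = p), (v : Q → ℂ) q
        = (v : Q → ℂ) p
    have : Finset.univ.filter (fun q => actW δ q ([] : List A) = p) = {p} := by
      ext q; rw [Finset.mem_filter]; simp [actW]
    rw [this, Finset.sum_singleton]
  simp only [rho, h]
  rfl

theorem rhoR_append {Q A : Type*} [Fintype Q] [DecidableEq Q] (δ : Q → A → Q)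
    (x y : List A) : rhoR δ (x ++ y) = rhoR δ x * rhoR δ y := by
  apply Subtype.ext
  exact rho_append δ x y

theorem rhoR_nil {Q A : Type*} [Fintype Q] [DecidableEq Q] (δ : Q → A → Q) :
    rhoR δ ([] : List A) = 1 := by
  apply Subtype.ext
  exact rho_nil δ

theorem theta_append {Q A : Type*} [Fintype Q] [DecidableEq Q] (δ : Q → A → Q)
    {k : ℕ} {nn : Fin k → ℕ}
    (e : Ralg δ →ₐ[ℂ] ∀ i : Fin k, Matrix (Fin (nn i)) (Fin (nn i)) ℂ)
    (x y : List A) (i : Fin k) :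
    theta δ e (x ++ y) i = theta δ e x i * theta δ e y i := by
  simp [theta, rhoR_append, map_mul, Pi.mul_apply]

theorem theta_nil {Q A : Type*} [Fintype Q] [DecidableEq Q] (δ : Q → A → Q)
    {k : ℕ} {nn : Fin k → ℕ}
    (e : Ralg δ →ₐ[ℂ] ∀ i : Fin k, Matrix (Fin (nn i)) (Fin (nn i)) ℂ) (i : Fin k) :
    theta δ e ([] : List A) i = 1 := by
  simp [theta, rhoR_nil, map_one, Pi.one_apply]

theorem imageSet_append {Q A : Type*} [Fintype Q] [DecidableEq Q] (δ : Q → A → Q)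
    (x y : List A) :
    imageSet δ (x ++ y) = (imageSet δ x).image (fun q => actW δ q y) := by
  ext p
  simp [imageSet, actW_append']

theorem wordRank_append_le_left {Q A : Type*} [Fintype Q] [DecidableEq Q] (δ : Q → A → Q)
    (x y : List A) : wordRank δ (x ++ y) ≤ wordRank δ x := by
  rw [wordRank, imageSet_append]
  exact (Finset.card_image_le).trans_eq rfl

theorem wordRank_append_le_right {Q A : Type*} [Fintype Q] [DecidableEq Q] (δ : Q → A → Q)
    (x y : List A) : wordRank δ (x ++ y) ≤ wordRank δ y := by
  rw [wordRank, imageSet_append]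
  apply Finset.card_le_card
  intro p hp
  rw [Finset.mem_image] at hp
  obtain ⟨q, _, hq⟩ := hp
  exact Finset.mem_image.2 ⟨q, Finset.mem_univ q, hq⟩

theorem wordRank_sandwich_le {Q A : Type*} [Fintype Q] [DecidableEq Q] (δ : Q → A → Q)
    (a w b : List A) : wordRank δ (a ++ w ++ b) ≤ wordRank δ w :=
  (wordRank_append_le_left δ (a ++ w) b).trans (wordRank_append_le_right δ a w)

theorem inFactor_sandwich {A : Type*} (u w a b : List A) (h : InFactor u w) :
    InFactor u (a ++ w ++ b) := by
  obtain ⟨c, d, hcd⟩ := h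
  exact ⟨a ++ c, d ++ b, by simp [hcd]⟩

theorem stmt15 {Q A : Type*} [Fintype Q] [DecidableEq Q] (δ : Q → A → Q)
    {k : ℕ} {nn : Fin k → ℕ}
    (e : Ralg δ →ₐ[ℂ] ∀ i : Fin k, Matrix (Fin (nn i)) (Fin (nn i)) ℂ)
    (he_surj : Function.Surjective e)
    (he_ker : ∀ x : Ralg δ, e x = 0 ↔ (x : (Module.End ℂ (Wperp Q))ᵐᵒᵖ) ∈ RadSet δ)
    (Ii : ∀ i : Fin k, Set (Matrix (Fin (nn i)) (Fin (nn i)) ℂ))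
    (hIi : ∀ i : Fin k, IsZeroMinimalIdeal (factorMonoid δ e i) (Ii i))
    (hIuniq : ∀ (i : Fin k) (J : Set (Matrix (Fin (nn i)) (Fin (nn i)) ℂ)),
      IsZeroMinimalIdeal (factorMonoid δ e i) J → J = Ii i)
    (hsync : IsSynchronizing δ)
    (v u : List A) (hu : IsVMinimal δ e v u) (i : Fin k) (hi : i ∈ suppW δ e u)
    (g : Matrix (Fin (nn i)) (Fin (nn i)) ℂ) (hg : g ∈ Ii i)
    (w : List A) (hw : URepresents δ e u i w g) (a b : List A) :
    URepresents δ e u i (a ++ w ++ b) (theta δ e a i * g * theta δ e b i) := by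
  obtain ⟨hwfac, hwθ, hwmin⟩ := hw
  set h : Matrix (Fin (nn i)) (Fin (nn i)) ℂ := theta δ e a i * g * theta δ e b i with hh
  have hθab : theta δ e (a ++ w ++ b) i = h := by
    rw [theta_append, theta_append, hwθ]
  refine ⟨inFactor_sandwich u w a b hwfac, hθab, ?_⟩
  by_cases h0 : h = 0
  · exact Or.inl h0
  right
  -- h ≠ 0, hence g ≠ 0
  have hg0 : g ≠ 0 := by
    intro hge
    apply h0
    simp [hh, hge]
  have hwmin' := hwmin.resolve_left hg0
  obtain ⟨hIideal, hI0, hIne, hImin⟩ := hIi i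
  have hMmem : ∀ x : List A, theta δ e x i ∈ factorMonoid δ e i := fun x => ⟨x, rfl⟩
  -- h ∈ Ii i
  have hhI : h ∈ Ii i := by
    have h1 : theta δ e a i * g ∈ Ii i := (hIideal.2 _ (hMmem a) g hg).1
    exact (hIideal.2 _ (hMmem b) _ h1).2
  -- g is a word image
  obtain ⟨wg, hwg⟩ := hIideal.1 hg
  -- the ideal J = M h M ∪ {0}
  set J : Set (Matrix (Fin (nn i)) (Fin (nn i)) ℂ) :=
    {m | m = 0 ∨ ∃ c d : List A, m = theta δ e c i * h * theta δ e d i} with hJ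
  have hhrepr : ∀ c d : List A,
      theta δ e c i * h * theta δ e d i = theta δ e (c ++ (a ++ wg ++ b) ++ d) i := by
    intro c d
    simp only [theta_append, hwg, hh]
  have hJideal : IsSetIdeal (factorMonoid δ e i) J := by
    constructor
    · rintro m (rfl | ⟨c, d, rfl⟩)
      · exact hIideal.1 hI0
      · rw [hhrepr]; exact hMmem _
    · rintro m ⟨z, rfl⟩ x (rfl | ⟨c, d, rfl⟩)
      · constructor
        · exact Or.inl (by simp)
        · exact Or.inl (by simp)
      · constructor
        · refine Or.inr ⟨z ++ c, d, ?_⟩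
          simp only [theta_append, hh, mul_assoc]
        · refine Or.inr ⟨c, d ++ z, ?_⟩
          simp only [theta_append, hh, mul_assoc]
  have hJsub : J ⊆ Ii i := by
    rintro m (rfl | ⟨c, d, rfl⟩)
    · exact hI0
    · have h1 : theta δ e c i * h ∈ Ii i := (hIideal.2 _ (hMmem c) h hhI).1
      exact (hIideal.2 _ (hMmem d) _ h1).2
  have hhJ : h ∈ J := by
    refine Or.inr ⟨[], [], ?_⟩
    simp [theta_nil]
  have hJne : J ≠ {0} := by
    intro hJe
    apply h0
    have := hJe ▸ hhJ
    simpa using this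
  have hJI : J = Ii i := hImin J hJideal (Or.inl rfl) hJsub hJne
  have hgJ : g ∈ J := hJI ▸ hg
  obtain ⟨c, d, hgcd⟩ := hgJ.resolve_left hg0
  -- minimality
  intro w' hw'fac hw'θ
  have hzfac : InFactor u (c ++ w' ++ d) := inFactor_sandwich u w' c d hw'fac
  have hzθ : theta δ e (c ++ w' ++ d) i = g := by
    rw [theta_append, theta_append, hw'θ, ← hgcd]
  calc wordRank δ (a ++ w ++ b) ≤ wordRank δ w := wordRank_sandwich_le δ a w b
    _ ≤ wordRank δ (c ++ w' ++ d) := hwmin' _ hzfac hzθ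
    _ ≤ wordRank δ w' := wordRank_sandwich_le δ c w' d

end
end
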